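/- The pair (μ₂*, μ₄*) = ((√15 − 5)/5, 6(9 − √15)/55) is a solution of the fixed point system 0 = −(1+η)μ₂ − (μ₄/4)·1/(1+μ₂)² and 0 = −(1/2 + 3η)μ₄ + (μ₄²/2)·1/(1+μ₂)³, where η = −(μ₄/8)·μ₂/(1+μ₂)³. -/

import Mathlib

theorem quartic_fixed_point_solution :
    let μ₂ : ℝ := (Real.sqrt 15 - 5) / 5
    let μ₄ : ℝ := 6 * (9 - Real.sqrt 15) / 55
    let η : ℝ := -(μ₄/8) * μ₂ / (1 + μ₂)^3
    (0 = -(1 + η) * μ₂ - (μ₄/4) * (1 / (1 + μ₂)^2)) ∧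
    (0 = -((1:ℝ)/2 + 3*η) * μ₄ + (μ₄^2/2) * (1 / (1 + μ₂)^3)) := by
  intro μ₂ μ₄ η
  have hs : Real.sqrt 15 ^ 2 = 15 := Real.sq_sqrt (by norm_num)
  have hs0 : (0:ℝ) < Real.sqrt 15 := Real.sqrt_pos.mpr (by norm_num)
  have h1 : (1 + μ₂) = Real.sqrt 15 / 5 := by simp only [μ₂]; ring
  have hs3 : Real.sqrt 15 ^ 3 = 15 * Real.sqrt 15 := by
    rw [pow_succ, hs]
  have hne : (1 + μ₂) ≠ 0 := by rw [h1]; positivity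
  have h : Real.sqrt 15 ≠ 0 := ne_of_gt hs0
  constructor
  · simp only [η, μ₂, μ₄]
    field_simp
    nlinarith [hs, hs3, hs0]
  · simp only [η, μ₂, μ₄]
    field_simp
    linear_combination (48600 + 18360*Real.sqrt 15 - 2640*Real.sqrt 15^2) * hs
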